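/- Let T be a strictly triangular representation of a Lie algebra L on a finite-dimensional space E over a field of characteristic 0, with fixed ordered basis, and let Γ be the group generated by {exp(T(l)) : l ∈ L}. Then every Γ-orbit in E contains a point x that is minimal with respect to the preorder ⪯: for every y in the orbit of x with y ≠ x, x ⪯ y and not y ⪯ x. -/

import Mathlib

attribute [local instance] LieRing.ofAssociativeRing

namespace Stmt10Aux

open Finset

variable {f L E : Type*} [Field f] [CharZero f] [LieRing L] [LieAlgebra f L]
  [AddCommGroup E] [Module f E] {n : ℕ}

/-- The generating set (matches `S` in the theorem statement). -/
def gset (B : Module.Basis (Fin n) f E) (T : L →ₗ⁅f⁆ Module.End f E) : Set (Module.End f E) :=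
  {g | ∃ l : L, g = ∑ m ∈ Finset.range n, ((m.factorial : f)⁻¹) • (T l) ^ m}

/-- The monoid generated. -/
def Ga (B : Module.Basis (Fin n) f E) (T : L →ₗ⁅f⁆ Module.End f E) : Submonoid (Module.End f E) :=
  Submonoid.closure (gset B T)

/-- Scaled exponential. -/
noncomputable def Ex (B : Module.Basis (Fin n) f E) (T : L →ₗ⁅f⁆ Module.End f E) (a : f) (l : L) :
    Module.End f E :=
  ∑ m ∈ Finset.range n, ((m.factorial : f)⁻¹ * a ^ m) • (T l) ^ m

lemma Ex_mem_gset (B : Module.Basis (Fin n) f E) (T : L →ₗ⁅f⁆ Module.End f E) (a : f) (l : L) :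
    Ex B T a l ∈ gset B T := by
  refine ⟨a • l, ?_⟩
  unfold Ex
  refine Finset.sum_congr rfl fun m _ => ?_
  rw [show T (a • l) = a • T l from T.map_smul a l, smul_pow, smul_smul]

lemma Ex_mem (B : Module.Basis (Fin n) f E) (T : L →ₗ⁅f⁆ Module.End f E) (a : f) (l : L) :
    Ex B T a l ∈ Ga B T :=
  Submonoid.subset_closure (Ex_mem_gset B T a l)

/-- coordinates -/
noncomputable def co (B : Module.Basis (Fin n) f E) (v : E) (i : Fin n) : f := B.repr v i

/-- expansion of a linear map in coordinates -/
lemma co_apply (B : Module.Basis (Fin n) f E) (h : Module.End f E) (v : E) (i : Fin n) :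
    co B (h v) i = ∑ i', co B v i' * co B (h (B i')) i := by
  conv_lhs => rw [← B.sum_repr v]
  simp only [map_sum, map_smul, co, Finsupp.coe_finset_sum, Finset.sum_apply,
    Finsupp.coe_smul, Pi.smul_apply, smul_eq_mul]

lemma co_sum {ι : Type*} (B : Module.Basis (Fin n) f E) (s : Finset ι) (z : ι → E) (i : Fin n) :
    co B (∑ m ∈ s, z m) i = ∑ m ∈ s, co B (z m) i := by
  simp [co]

lemma co_smul (B : Module.Basis (Fin n) f E) (c : f) (z : E) (i : Fin n) :
    co B (c • z) i = c * co B z i := by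
  simp [co]

section withHT

variable (B : Module.Basis (Fin n) f E) (T : L →ₗ⁅f⁆ Module.End f E)
  (hT : ∀ l : L, ∀ i j : Fin n, j ≤ i → B.repr (T l (B i)) j = 0)

include hT

lemma co_T_basis {l : L} {i i' : Fin n} (h : i ≤ i') : co B (T l (B i')) i = 0 :=
  hT l i' i h

lemma str1 (l : L) {v w : E} {i : Fin n} (h : ∀ i' < i, co B v i' = co B w i') :
    co B (T l v) i = co B (T l w) i := by
  rw [co_apply, co_apply]
  refine Finset.sum_congr rfl fun i' _ => ?_
  by_cases hi : i' < i
  · rw [h i' hi]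
  · rw [co_T_basis B T hT (le_of_not_gt hi), mul_zero, mul_zero]

lemma strpow (l : L) : ∀ (m : ℕ) (v w : E) (i : Fin n),
    (∀ i' < i, co B v i' = co B w i') →
    co B ((T l ^ (m + 1)) v) i = co B ((T l ^ (m + 1)) w) i := by
  intro m
  induction m with
  | zero => intro v w i h; simpa using str1 B T hT l h
  | succ m ih =>
    intro v w i h
    have e : (T l : Module.End f E) ^ (m + 1 + 1) = (T l) ^ (m + 1) * (T l) := pow_succ _ _
    rw [e]
    show co B ((T l ^ (m+1)) (T l v)) i = co B ((T l ^ (m+1)) (T l w)) i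
    exact ih (T l v) (T l w) i (fun i' hi' => str1 B T hT l (fun k hk => h k (hk.trans hi')))

lemma co_pow_zero (l : L) : ∀ (m : ℕ) (v : E) (i : Fin n), (i : ℕ) < m →
    co B ((T l ^ m) v) i = 0 := by
  intro m
  induction m with
  | zero => intro v i h; omega
  | succ m ih =>
    intro v i h
    have e : (T l : Module.End f E) ^ (m + 1) = (T l) * (T l) ^ m := pow_succ' _ _
    rw [e]
    show co B (T l ((T l ^ m) v)) i = 0
    rw [co_apply]
    refine Finset.sum_eq_zero fun i' _ => ?_
    by_cases hi : i' < i
    · rw [ih _ i' (by omega), zero_mul]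
    · rw [co_T_basis B T hT (le_of_not_gt hi), mul_zero]

lemma Tpow_n (l : L) : (T l : Module.End f E) ^ n = 0 := by
  ext v
  refine B.ext_elem fun i => ?_
  show B.repr ((T l ^ n) v) i = B.repr ((0 : Module.End f E) v) i
  have := co_pow_zero B T hT l n v i i.isLt
  simp only [co] at this
  simp [this]

lemma Tpow_zero_of_le (l : L) {m : ℕ} (hm : n ≤ m) : (T l : Module.End f E) ^ m = 0 := by
  obtain ⟨k, rfl⟩ := Nat.exists_eq_add_of_le hm
  rw [pow_add, Tpow_n B T hT, zero_mul]

omit hT in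
lemma Ex_apply (a : f) (l : L) (z : E) (i : Fin n) :
    co B (Ex B T a l z) i
      = ∑ m ∈ Finset.range n, ((m.factorial : f)⁻¹ * a ^ m) * co B ((T l ^ m) z) i := by
  have h1 : Ex B T a l z = ∑ m ∈ Finset.range n, ((m.factorial : f)⁻¹ * a ^ m) • ((T l ^ m) z) := by
    unfold Ex
    rw [LinearMap.sum_apply]
    refine Finset.sum_congr rfl fun m _ => ?_
    rw [LinearMap.smul_apply]
  rw [h1, co_sum]
  refine Finset.sum_congr rfl fun m _ => ?_
  rw [co_smul]

lemma Ex_mul (a b : f) (l : L) : Ex B T a l * Ex B T b l = Ex B T (a + b) l := by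
  classical
  set A : Module.End f E := T l with hA
  unfold Ex
  rw [Finset.sum_mul_sum]
  have h1 : ∀ p q : ℕ,
      (((p.factorial : f)⁻¹ * a ^ p) • A ^ p) * (((q.factorial : f)⁻¹ * b ^ q) • A ^ q)
      = (((p.factorial : f)⁻¹ * a ^ p) * ((q.factorial : f)⁻¹ * b ^ q)) • A ^ (p + q) := by
    intro p q; rw [smul_mul_smul_comm, pow_add]
  calc
    ∑ p ∈ Finset.range n, ∑ q ∈ Finset.range n,
        (((p.factorial : f)⁻¹ * a ^ p) • A ^ p) * (((q.factorial : f)⁻¹ * b ^ q) • A ^ q)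
      = ∑ p ∈ Finset.range n, ∑ q ∈ Finset.range (n - p),
        (((p.factorial : f)⁻¹ * a ^ p) * ((q.factorial : f)⁻¹ * b ^ q)) • A ^ (p + q) := by
        refine Finset.sum_congr rfl fun p hp => ?_
        rw [← Finset.sum_subset (Finset.range_subset_range.2 (Nat.sub_le n p))]
        · exact Finset.sum_congr rfl fun q _ => h1 p q
        · intro q hq hq'
          have hn : n ≤ p + q := by
            simp only [Finset.mem_range, not_lt] at hq hq' ⊢
            omega
          rw [h1, Tpow_zero_of_le B T hT l hn, smul_zero]
    _ = ∑ m ∈ Finset.range n, ∑ p ∈ Finset.range (m + 1),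
        (((p.factorial : f)⁻¹ * a ^ p) * (((m - p).factorial : f)⁻¹ * b ^ (m - p))) • A ^ m := by
        rw [Finset.sum_sigma', Finset.sum_sigma']
        refine Finset.sum_nbij' (fun x => ⟨x.1 + x.2, x.1⟩) (fun x => ⟨x.2, x.1 - x.2⟩)
          ?_ ?_ ?_ ?_ ?_
        · rintro ⟨p, q⟩ h
          simp only [Finset.mem_sigma, Finset.mem_range] at h ⊢
          omega
        · rintro ⟨m, p⟩ h
          simp only [Finset.mem_sigma, Finset.mem_range] at h ⊢
          omega
        · rintro ⟨p, q⟩ h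
          simp
        · rintro ⟨m, p⟩ h
          simp only [Finset.mem_sigma, Finset.mem_range] at h
          have hpm : p + (m - p) = m := by omega
          simp [hpm]
        · rintro ⟨p, q⟩ h
          simp only [Nat.add_sub_cancel_left]
    _ = ∑ m ∈ Finset.range n, ((m.factorial : f)⁻¹ * (a + b) ^ m) • A ^ m := by
        refine Finset.sum_congr rfl fun m _ => ?_
        rw [← Finset.sum_smul]
        congr 1
        rw [add_pow]
        rw [Finset.mul_sum]
        refine Finset.sum_congr rfl fun p hp => ?_
        have hpm : p ≤ m := by
          simp only [Finset.mem_range] at hp; omega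
        have hfact : ((m.choose p : f) * (p.factorial : f) * ((m - p).factorial : f))
            = (m.factorial : f) := by
          exact_mod_cast congrArg (fun t : ℕ => (t : f))
            (Nat.choose_mul_factorial_mul_factorial hpm)
        have hp0 : (p.factorial : f) ≠ 0 := Nat.cast_ne_zero.2 (Nat.factorial_ne_zero p)
        have hmp0 : ((m - p).factorial : f) ≠ 0 := Nat.cast_ne_zero.2 (Nat.factorial_ne_zero _)
        have hm0 : (m.factorial : f) ≠ 0 := Nat.cast_ne_zero.2 (Nat.factorial_ne_zero m)
        have key : ((m.factorial : f))⁻¹ * ((m.choose p : f))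
            = (p.factorial : f)⁻¹ * (((m - p).factorial : f))⁻¹ := by
          field_simp
          linear_combination hfact
        calc ((p.factorial : f)⁻¹ * a ^ p) * (((m - p).factorial : f)⁻¹ * b ^ (m - p))
            = ((p.factorial : f)⁻¹ * ((m - p).factorial : f)⁻¹) * (a ^ p * b ^ (m - p)) := by
              ring
          _ = ((m.factorial : f)⁻¹ * (m.choose p : f)) * (a ^ p * b ^ (m - p)) := by rw [key]
          _ = (m.factorial : f)⁻¹ * (a ^ p * b ^ (m - p) * (m.choose p : f)) := by ring

lemma Ex_zero (hn : 0 < n) (l : L) : Ex B T 0 l = 1 := by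
  unfold Ex
  rw [Finset.sum_eq_single 0]
  · simp
  · intro m _ hm
    rw [zero_pow hm, mul_zero, zero_smul]
  · intro h; exact absurd (Finset.mem_range.2 hn) h

lemma Ex_cancel (hn : 0 < n) (a : f) (l : L) : Ex B T a l * Ex B T (-a) l = 1 := by
  rw [Ex_mul B T hT, add_neg_cancel, Ex_zero B T hT hn]

lemma Ex_cancel' (hn : 0 < n) (a : f) (l : L) : Ex B T (-a) l * Ex B T a l = 1 := by
  rw [Ex_mul B T hT, neg_add_cancel, Ex_zero B T hT hn]

end withHT

/-! ### Parametrized words -/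

section words

variable (B : Module.Basis (Fin n) f E) (T : L →ₗ⁅f⁆ Module.End f E)

/-- evaluation of a parametrized word -/
noncomputable def fev {s : ℕ} (W : List (L × MvPolynomial (Fin s) f)) (u : Fin s → f) :
    Module.End f E :=
  (W.map (fun q => Ex B T (MvPolynomial.eval u q.2) q.1)).prod

lemma fev_nil {s : ℕ} (u : Fin s → f) :
    fev B T ([] : List (L × MvPolynomial (Fin s) f)) u = 1 := rfl

lemma fev_cons {s : ℕ} (q : L × MvPolynomial (Fin s) f) (W : List (L × MvPolynomial (Fin s) f))
    (u : Fin s → f) :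
    fev B T (q :: W) u = Ex B T (MvPolynomial.eval u q.2) q.1 * fev B T W u := by
  unfold fev; rw [List.map_cons, List.prod_cons]

lemma fev_append {s : ℕ} (W₁ W₂ : List (L × MvPolynomial (Fin s) f)) (u : Fin s → f) :
    fev B T (W₁ ++ W₂) u = fev B T W₁ u * fev B T W₂ u := by
  unfold fev; rw [List.map_append, List.prod_append]

lemma fev_mem {s : ℕ} (W : List (L × MvPolynomial (Fin s) f)) (u : Fin s → f) :
    fev B T W u ∈ Ga B T := by
  induction W with
  | nil => exact one_mem _
  | cons q W ih => rw [fev_cons]; exact mul_mem (Ex_mem B T _ _) ih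

/-- the inverse word -/
noncomputable def finv {s : ℕ} (W : List (L × MvPolynomial (Fin s) f)) : List (L × MvPolynomial (Fin s) f) :=
  (W.map (fun q => (q.1, -q.2))).reverse

variable (hT : ∀ l : L, ∀ i j : Fin n, j ≤ i → B.repr (T l (B i)) j = 0) (hn : 0 < n)

include hT hn

lemma fev_finv_mul {s : ℕ} (W : List (L × MvPolynomial (Fin s) f)) (u : Fin s → f) :
    fev B T (finv W) u * fev B T W u = 1 := by
  induction W with
  | nil => simp [fev_nil, finv]
  | cons q W ih =>
    have h0 : finv (q :: W) = finv W ++ [(q.1, -q.2)] := by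
      unfold finv; simp
    rw [h0, fev_append, fev_cons, fev_cons, fev_nil, mul_one]
    have h1 : Ex B T (MvPolynomial.eval u (-q.2)) q.1 * Ex B T (MvPolynomial.eval u q.2) q.1
        = 1 := by
      rw [map_neg]
      exact Ex_cancel' B T hT hn _ _
    rw [mul_assoc, ← mul_assoc (Ex B T (MvPolynomial.eval u (-q.2)) q.1), h1, one_mul, ih]

lemma fev_mul_finv {s : ℕ} (W : List (L × MvPolynomial (Fin s) f)) (u : Fin s → f) :
    fev B T W u * fev B T (finv W) u = 1 := by
  induction W with
  | nil => simp [fev_nil, finv]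
  | cons q W ih =>
    have h0 : finv (q :: W) = finv W ++ [(q.1, -q.2)] := by
      unfold finv; simp
    rw [h0, fev_append, fev_cons, fev_cons, fev_nil, mul_one, mul_assoc,
      ← mul_assoc (fev B T W u), ih, one_mul, map_neg]
    exact Ex_cancel B T hT hn _ _

end words

section words2

variable (B : Module.Basis (Fin n) f E) (T : L →ₗ⁅f⁆ Module.End f E)

/-- substitution into a word -/
noncomputable def fsub {s s' : ℕ} (σ : Fin s → MvPolynomial (Fin s') f)
    (W : List (L × MvPolynomial (Fin s) f)) : List (L × MvPolynomial (Fin s') f) :=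
  W.map (fun q => (q.1, MvPolynomial.aeval σ q.2))

lemma mv_eval_aeval {s s' : ℕ} (σ : Fin s → MvPolynomial (Fin s') f)
    (θ : MvPolynomial (Fin s) f) (u : Fin s' → f) :
    MvPolynomial.eval u (MvPolynomial.aeval σ θ) =
      MvPolynomial.eval (fun i => MvPolynomial.eval u (σ i)) θ := by
  induction θ using MvPolynomial.induction_on with
  | C a => simp
  | add p q hp hq => simp only [map_add, hp, hq]
  | mul_X p i hp => simp only [map_mul, MvPolynomial.aeval_X, MvPolynomial.eval_X, hp]

lemma fev_fsub {s s' : ℕ} (σ : Fin s → MvPolynomial (Fin s') f)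
    (W : List (L × MvPolynomial (Fin s) f)) (u : Fin s' → f) :
    fev B T (fsub σ W) u = fev B T W (fun i => MvPolynomial.eval u (σ i)) := by
  induction W with
  | nil => rfl
  | cons q W ih =>
    show fev B T ((q.1, MvPolynomial.aeval σ q.2) :: fsub σ W) u = _
    rw [fev_cons, fev_cons, ih, mv_eval_aeval]

/-- polynomial coordinates of the action of a word on a fixed vector -/
lemma fev_poly {s : ℕ} (W : List (L × MvPolynomial (Fin s) f)) (v₀ : E) :
    ∃ p : Fin n → MvPolynomial (Fin s) f, ∀ (u : Fin s → f) (i : Fin n),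
      co B (fev B T W u v₀) i = MvPolynomial.eval u (p i) := by
  induction W with
  | nil =>
    refine ⟨fun i => MvPolynomial.C (co B v₀ i), fun u i => ?_⟩
    rw [fev_nil]
    simp
  | cons q W ih =>
    obtain ⟨p', hp'⟩ := ih
    refine ⟨fun i => ∑ m ∈ Finset.range n,
      (MvPolynomial.C ((m.factorial : f)⁻¹) * q.2 ^ m) *
        (∑ i', p' i' * MvPolynomial.C (co B ((T q.1 ^ m) (B i')) i)), fun u i => ?_⟩
    rw [fev_cons]
    show co B (Ex B T (MvPolynomial.eval u q.2) q.1 ((fev B T W u) v₀)) i = _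
    rw [Ex_apply]
    rw [map_sum]
    refine Finset.sum_congr rfl fun m _ => ?_
    rw [co_apply]
    simp only [map_mul, map_sum, MvPolynomial.eval_C, map_pow]
    rw [Finset.mul_sum, Finset.mul_sum]
    refine Finset.sum_congr rfl fun i' _ => ?_
    rw [hp' u i']

end words2

/-! ### The triangularity property -/

section tri

variable (B : Module.Basis (Fin n) f E) (T : L →ₗ⁅f⁆ Module.End f E)

/-- `g` shifts each coordinate by an amount depending only on earlier coordinates -/
def TriP (B : Module.Basis (Fin n) f E) (g : Module.End f E) : Prop :=
  ∀ (v w : E) (i : Fin n), (∀ i' < i, co B v i' = co B w i') →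
    co B (g v) i - co B v i = co B (g w) i - co B w i

lemma triP_one : TriP B (1 : Module.End f E) := by
  intro v w i h
  simp [co, h i]

lemma triP_agree {g : Module.End f E} (hg : TriP B g) {v w : E} {i : Fin n}
    (h : ∀ i' < i, co B v i' = co B w i') : ∀ i' < i, co B (g v) i' = co B (g w) i' := by
  intro i' hi'
  have h1 := hg v w i' (fun k hk => h k (hk.trans hi'))
  have h2 := h i' hi'
  linear_combination h1 + h2

lemma triP_mul {g h : Module.End f E} (hg : TriP B g) (hh : TriP B h) : TriP B (g * h) := by
  intro v w i hvw
  have h1 : co B ((g * h) v) i - co B v i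
      = (co B (g (h v)) i - co B (h v) i) + (co B (h v) i - co B v i) := by
    show co B (g (h v)) i - co B v i = _
    ring
  have h2 : co B ((g * h) w) i - co B w i
      = (co B (g (h w)) i - co B (h w) i) + (co B (h w) i - co B w i) := by
    show co B (g (h w)) i - co B w i = _
    ring
  rw [h1, h2, hh v w i hvw, hg (h v) (h w) i (triP_agree B hh hvw)]

variable (hT : ∀ l : L, ∀ i j : Fin n, j ≤ i → B.repr (T l (B i)) j = 0)

include hT

lemma triP_gen {g : Module.End f E} (hg : g ∈ gset B T) : TriP B g := by
  obtain ⟨l, rfl⟩ := hg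
  intro v w i h
  have hn : 0 < n := i.pos
  have hrange : Finset.range n = insert 0 (Finset.Ico 1 n) := by
    ext m
    simp only [Finset.mem_range, Finset.mem_insert, Finset.mem_Ico]
    omega
  have hv : ∀ z : E,
      co B ((∑ m ∈ Finset.range n, ((m.factorial : f)⁻¹) • (T l) ^ m) z) i
      = co B z i + ∑ m ∈ Finset.Ico 1 n, (m.factorial : f)⁻¹ * co B ((T l ^ m) z) i := by
    intro z
    have h1 : (∑ m ∈ Finset.range n, ((m.factorial : f)⁻¹) • (T l) ^ m) z
        = ∑ m ∈ Finset.range n, ((m.factorial : f)⁻¹) • ((T l ^ m) z) := by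
      rw [LinearMap.sum_apply]
      exact Finset.sum_congr rfl fun m _ => rfl
    rw [h1, co_sum, hrange, Finset.sum_insert (by simp)]
    congr 1
    · simp [co_smul]
    · exact Finset.sum_congr rfl fun m _ => co_smul B _ _ _
  rw [hv v, hv w]
  have h2 : ∑ m ∈ Finset.Ico 1 n, (m.factorial : f)⁻¹ * co B ((T l ^ m) v) i
      = ∑ m ∈ Finset.Ico 1 n, (m.factorial : f)⁻¹ * co B ((T l ^ m) w) i := by
    refine Finset.sum_congr rfl fun m hm => ?_
    obtain ⟨k, rfl⟩ : ∃ k, m = k + 1 := by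
      refine ⟨m - 1, ?_⟩
      simp only [Finset.mem_Ico] at hm
      omega
    rw [strpow B T hT l k v w i h]
  rw [h2]
  ring

lemma triP_mem {g : Module.End f E} (hg : g ∈ Ga B T) : TriP B g := by
  induction hg using Submonoid.closure_induction with
  | mem g h => exact triP_gen B T hT h
  | one => exact triP_one B
  | mul g₁ g₂ h₁ h₂ ih₁ ih₂ => exact triP_mul B ih₁ ih₂

end tri

/-! ### fixing the first `j` coordinates at a base point -/

section basepoint

variable (B : Module.Basis (Fin n) f E) (x : E)

/-- `g` fixes the first `j` coordinates of `x`. -/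
def fixLT (j : ℕ) (g : Module.End f E) : Prop :=
  ∀ i : Fin n, (i : ℕ) < j → co B (g x) i = co B x i

lemma fixLT_mono {j j' : ℕ} (h : j' ≤ j) {g : Module.End f E} (hg : fixLT B x j g) :
    fixLT B x j' g := fun i hi => hg i (lt_of_lt_of_le hi h)

lemma fixLT_one (j : ℕ) : fixLT B x j (1 : Module.End f E) := by
  intro i _; rfl

lemma delta_mul {g h : Module.End f E} (hg : TriP B g) (κ : Fin n)
    (hh : fixLT B x κ h) :
    co B ((g * h) x) κ = co B (g x) κ + co B (h x) κ - co B x κ := by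
  have h2 := hg (h x) x κ (fun i' hi' => hh i' hi')
  show co B (g (h x)) κ = _
  linear_combination h2

lemma fixLT_mul {j : ℕ} {g h : Module.End f E} (hg : TriP B g) (hfg : fixLT B x j g)
    (hfh : fixLT B x j h) : fixLT B x j (g * h) := by
  intro i hi
  have h1 := delta_mul B x hg i (fixLT_mono B x (le_of_lt hi) hfh)
  rw [h1, hfg i hi, hfh i hi]
  ring

lemma fixLT_inv {j : ℕ} {g g' : Module.End f E} (hg' : TriP B g') (hinv : g' * g = 1)
    (hfg : fixLT B x j g) : fixLT B x j g' := by
  intro i hi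
  have h2 := hg' (g x) x i (fun i' hi' => hfg i' (lt_trans hi' hi))
  have h3 : g' (g x) = x := by
    have h4 : (g' * g) x = (1 : Module.End f E) x := by rw [hinv]
    simpa using h4
  rw [h3, hfg i hi] at h2
  linear_combination -h2

lemma delta_inv {g g' : Module.End f E} (hg' : TriP B g') (hinv : g' * g = 1)
    (κ : Fin n) (hfg : fixLT B x κ g) :
    co B (g' x) κ - co B x κ = -(co B (g x) κ - co B x κ) := by
  have h2 := hg' (g x) x κ (fun i' hi' => hfg i' hi')
  have h3 : g' (g x) = x := by
    have h4 : (g' * g) x = (1 : Module.End f E) x := by rw [hinv]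
    simpa using h4
  rw [h3] at h2
  linear_combination -h2

end basepoint


/-! ### single-variable polynomial helpers -/

section polyhelp

variable {F : Type*} [Field F] [CharZero F]

lemma coeff_comp_C_mul_X (ψ : Polynomial F) (c : F) (m : ℕ) :
    (ψ.comp (Polynomial.C c * Polynomial.X)).coeff m = c ^ m * ψ.coeff m := by
  induction ψ using Polynomial.induction_on' with
  | add p q hp hq => simp [Polynomial.add_comp, hp, hq, mul_add]
  | monomial k a =>
    rw [← Polynomial.C_mul_X_pow_eq_monomial, Polynomial.mul_comp, Polynomial.C_comp,
      Polynomial.pow_comp, Polynomial.X_comp, mul_pow, ← Polynomial.C_pow,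
      ← mul_assoc, ← Polynomial.C_mul, Polynomial.coeff_C_mul, Polynomial.coeff_C_mul,
      Polynomial.coeff_X_pow]
    by_cases hmk : m = k
    · subst hmk; simp; ring
    · simp [hmk]

lemma natDegree_le_one_of_additive (ψ : Polynomial F)
    (h : ∀ a b : F, ψ.eval (a + b) = ψ.eval a + ψ.eval b) : ψ.natDegree ≤ 1 := by
  by_contra hd
  push_neg at hd
  have hne : ψ ≠ 0 := by
    intro h0; rw [h0] at hd; simp at hd
  have h2 : ∀ t : F, ψ.eval (2 * t) = 2 * ψ.eval t := by
    intro t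
    have := h t t
    rw [two_mul, this]; ring
  have hfun : ψ.comp (Polynomial.C 2 * Polynomial.X) = Polynomial.C 2 * ψ := by
    apply Polynomial.funext
    intro r
    rw [Polynomial.eval_comp]
    simp [h2 r]
  have hco := congrArg (fun p : Polynomial F => p.coeff ψ.natDegree) hfun
  simp only [coeff_comp_C_mul_X, Polynomial.coeff_C_mul] at hco
  have hlead : ψ.coeff ψ.natDegree ≠ 0 := by
    rw [← Polynomial.leadingCoeff]
    exact Polynomial.leadingCoeff_ne_zero.2 hne
  have h2D : (2 : F) ^ ψ.natDegree ≠ 2 := by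
    intro hc
    have hc2 : ((2 ^ ψ.natDegree : ℕ) : F) = ((2 : ℕ) : F) := by push_cast; exact hc
    have := Nat.cast_inj.mp hc2
    have h4 : 4 ≤ 2 ^ ψ.natDegree := by
      calc (4 : ℕ) = 2 ^ 2 := rfl
      _ ≤ 2 ^ ψ.natDegree := Nat.pow_le_pow_right (by omega) (by omega)
    omega
  apply h2D
  have : ((2:F) ^ ψ.natDegree - 2) * ψ.coeff ψ.natDegree = 0 := by
    linear_combination hco
  rcases mul_eq_zero.1 this with h5 | h5
  · linear_combination h5
  · exact absurd h5 hlead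

lemma shiftdiff_natDegree (ψ : Polynomial F) (t₀ : F) (h1 : 1 ≤ ψ.natDegree) :
    (ψ.comp (Polynomial.X + Polynomial.C t₀) - Polynomial.C (ψ.eval t₀) - ψ).natDegree
      ≤ ψ.natDegree - 1 := by
  set D := ψ.natDegree with hD
  refine Polynomial.natDegree_le_iff_coeff_eq_zero.2 fun N hN => ?_
  have hND : D ≤ N := by omega
  have hcomp_deg : (ψ.comp (Polynomial.X + Polynomial.C t₀)).natDegree = D := by
    rw [Polynomial.natDegree_comp, Polynomial.natDegree_X_add_C, mul_one]
  have hCc : (Polynomial.C (ψ.eval t₀)).coeff N = 0 := by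
    rw [Polynomial.coeff_C]
    have : N ≠ 0 := by omega
    simp [this]
  simp only [Polynomial.coeff_sub, hCc]
  rcases eq_or_lt_of_le hND with hND' | hND'
  · subst hND'
    have hcompN : (ψ.comp (Polynomial.X + Polynomial.C t₀)).coeff D = ψ.coeff D := by
      have hl : (ψ.comp (Polynomial.X + Polynomial.C t₀)).coeff D
          = (ψ.comp (Polynomial.X + Polynomial.C t₀)).leadingCoeff := by
        rw [Polynomial.leadingCoeff, hcomp_deg]
      rw [hl, Polynomial.leadingCoeff_comp (by rw [Polynomial.natDegree_X_add_C]; omega)]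
      rw [(Polynomial.monic_X_add_C t₀).leadingCoeff, one_pow, mul_one]
      rfl
    rw [hcompN]
    ring
  · rw [Polynomial.coeff_eq_zero_of_natDegree_lt (by rw [hcomp_deg]; omega),
      Polynomial.coeff_eq_zero_of_natDegree_lt (by omega : ψ.natDegree < N)]
    ring

end polyhelp

/-! ### converting a multivariate polynomial along a line -/

lemma mv_line_eval {s : ℕ} (P : MvPolynomial (Fin s) f) (g : Fin s → Polynomial f) (t : f) :
    Polynomial.eval t (MvPolynomial.aeval g P)
      = MvPolynomial.eval (fun i => Polynomial.eval t (g i)) P := by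
  induction P using MvPolynomial.induction_on with
  | C a => simp
  | add p q hp hq => simp [hp, hq]
  | mul_X p i hp => simp [hp]

/-! ### the descent producing a linear slope, and the main induction -/

section mainsec

variable (B : Module.Basis (Fin n) f E) (T : L →ₗ⁅f⁆ Module.End f E)
  (hT : ∀ l : L, ∀ i j : Fin n, j ≤ i → B.repr (T l (B i)) j = 0) (hn : 0 < n)

include hT hn

lemma descent (x : E) (jf : Fin n) :
    ∀ (d : ℕ) (V : List (L × MvPolynomial (Fin 1) f)) (ψ : Polynomial f),
    (∀ t : f, fixLT B x (jf : ℕ) (fev B T V (fun _ => t))) →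
    (fev B T V (fun _ => (0:f)) = 1) →
    (∀ t : f, co B (fev B T V (fun _ => t) x) jf - co B x jf = ψ.eval t) →
    ψ ≠ 0 → ψ.coeff 0 = 0 → ψ.natDegree ≤ d →
    ∃ (V' : List (L × MvPolynomial (Fin 1) f)) (e : f), e ≠ 0 ∧
      (∀ t : f, fixLT B x (jf : ℕ) (fev B T V' (fun _ => t))) ∧
      (fev B T V' (fun _ => (0:f)) = 1) ∧
      (∀ t : f, co B (fev B T V' (fun _ => t) x) jf = co B x jf + e * t) := by
  intro d
  induction d with
  | zero =>
    intro V ψ _ _ _ hne h0 hdeg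
    exact absurd (by rw [Polynomial.eq_C_of_natDegree_le_zero hdeg, h0, map_zero]) hne
  | succ d ih =>
    intro V ψ hfix h1 hval hne h0 hdeg
    by_cases hle : ψ.natDegree ≤ d
    · exact ih V ψ hfix h1 hval hne h0 hle
    · have hDeq : ψ.natDegree = d + 1 := le_antisymm hdeg (by omega)
      by_cases hone : ψ.natDegree ≤ 1
      · -- linear case
        refine ⟨V, ψ.coeff 1, ?_, hfix, h1, ?_⟩
        · have : ψ.natDegree = 1 := by omega
          have hl : ψ.coeff 1 = ψ.leadingCoeff := by rw [Polynomial.leadingCoeff, this]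
          rw [hl]
          exact Polynomial.leadingCoeff_ne_zero.2 hne
        · intro t
          have hv := hval t
          have hev : ψ.eval t = ψ.coeff 1 * t := by
            conv_lhs => rw [Polynomial.eq_X_add_C_of_natDegree_le_one hone]
            rw [h0]
            simp
          rw [hev] at hv
          linear_combination hv
      · -- degree at least two
        have hexist : ∃ t₀ : f,
            ψ.comp (Polynomial.X + Polynomial.C t₀) - Polynomial.C (ψ.eval t₀) - ψ ≠ 0 := by
          by_contra hall
          push_neg at hall
          have hadd : ∀ a b : f, ψ.eval (a + b) = ψ.eval a + ψ.eval b := by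
            intro a b
            have h5 := congrArg (Polynomial.eval a) (hall b)
            simp only [Polynomial.eval_sub, Polynomial.eval_comp, Polynomial.eval_add,
              Polynomial.eval_X, Polynomial.eval_C, Polynomial.eval_zero] at h5
            linear_combination h5
          have := natDegree_le_one_of_additive ψ hadd
          omega
        obtain ⟨t₀, hψ'ne⟩ := hexist
        set ψ' : Polynomial f :=
          ψ.comp (Polynomial.X + Polynomial.C t₀) - Polynomial.C (ψ.eval t₀) - ψ with hψ'def
        set V₁ := fsub (fun _ : Fin 1 =>
          (MvPolynomial.X 0 + MvPolynomial.C t₀ : MvPolynomial (Fin 1) f)) V with hV₁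
        set Vc := fsub (fun _ : Fin 1 => (MvPolynomial.C t₀ : MvPolynomial (Fin 1) f)) V with hVc
        set V₂ := finv Vc with hV₂
        set V₃ := finv V with hV₃
        set W := V₁ ++ V₂ ++ V₃ with hW
        have hev1 : ∀ t : f, fev B T V₁ (fun _ => t) = fev B T V (fun _ => t + t₀) := by
          intro t; rw [hV₁, fev_fsub]; congr 1; funext i; simp
        have hevc : ∀ u : Fin 1 → f, fev B T Vc u = fev B T V (fun _ => t₀) := by
          intro u; rw [hVc, fev_fsub]; congr 1; funext i; simp
        have hWev : ∀ t : f, fev B T W (fun _ => t)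
            = (fev B T V₁ (fun _ => t) * fev B T V₂ (fun _ => t)) * fev B T V₃ (fun _ => t) := by
          intro t; rw [hW, fev_append, fev_append]
        -- triangularity of pieces
        have tri1 : ∀ t : f, TriP B (fev B T V₁ (fun _ => t)) :=
          fun t => triP_mem B T hT (fev_mem B T _ _)
        have tri2 : ∀ t : f, TriP B (fev B T V₂ (fun _ => t)) :=
          fun t => triP_mem B T hT (fev_mem B T _ _)
        have tri3 : ∀ t : f, TriP B (fev B T V₃ (fun _ => t)) :=
          fun t => triP_mem B T hT (fev_mem B T _ _)
        -- fixing
        have fix1 : ∀ t : f, fixLT B x (jf : ℕ) (fev B T V₁ (fun _ => t)) := by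
          intro t; rw [hev1]; exact hfix _
        have fix2 : ∀ t : f, fixLT B x (jf : ℕ) (fev B T V₂ (fun _ => t)) := by
          intro t
          refine fixLT_inv B x (tri2 t) (fev_finv_mul B T hT hn Vc _) ?_
          rw [hevc]; exact hfix _
        have fix3 : ∀ t : f, fixLT B x (jf : ℕ) (fev B T V₃ (fun _ => t)) := by
          intro t
          exact fixLT_inv B x (tri3 t) (fev_finv_mul B T hT hn V _) (hfix t)
        have hfix' : ∀ t : f, fixLT B x (jf : ℕ) (fev B T W (fun _ => t)) := by
          intro t
          rw [hWev]
          exact fixLT_mul B x (triP_mul B (tri1 t) (tri2 t))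
            (fixLT_mul B x (tri1 t) (fix1 t) (fix2 t)) (fix3 t)
        -- value 1 at 0
        have h1' : fev B T W (fun _ => (0:f)) = 1 := by
          rw [hWev]
          have e1 : fev B T V₁ (fun _ => (0:f)) = fev B T V (fun _ => t₀) := by
            rw [hev1]; congr 1; funext i; simp
          have e3 : fev B T V₃ (fun _ => (0:f)) = 1 := by
            have := fev_finv_mul B T hT hn V (fun _ : Fin 1 => (0:f))
            rw [h1, mul_one] at this
            exact this
          have e2 : fev B T V₁ (fun _ => (0:f)) * fev B T V₂ (fun _ => (0:f)) = 1 := by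
            rw [e1]
            have := fev_mul_finv B T hT hn Vc (fun _ : Fin 1 => (0:f))
            rw [hevc] at this
            exact this
          rw [e2, e3, one_mul]
        -- value function
        have hval' : ∀ t : f,
            co B (fev B T W (fun _ => t) x) jf - co B x jf = ψ'.eval t := by
          intro t
          have d3 : co B (fev B T V₃ (fun _ => t) x) jf - co B x jf = -(ψ.eval t) := by
            have := delta_inv B x (tri3 t) (fev_finv_mul B T hT hn V _) jf (hfix t)
            rw [this, hval t]
          have d2 : co B (fev B T V₂ (fun _ => t) x) jf - co B x jf = -(ψ.eval t₀) := by
            have h6 := delta_inv B x (tri2 t) (fev_finv_mul B T hT hn Vc _) jf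
              (by rw [hevc]; exact hfix _)
            rw [h6, hevc]
            have := hval t₀
            linear_combination -this
          have d1 : co B (fev B T V₁ (fun _ => t) x) jf - co B x jf = ψ.eval (t + t₀) := by
            rw [hev1]; exact hval _
          have m1 := delta_mul B x (triP_mul B (tri1 t) (tri2 t)) jf (fix3 t)
          have m2 := delta_mul B x (tri1 t) jf (fix2 t)
          rw [hWev, m1, m2]
          have : ψ'.eval t = ψ.eval (t + t₀) - ψ.eval t₀ - ψ.eval t := by
            rw [hψ'def]
            simp [Polynomial.eval_comp]
          rw [this]
          linear_combination d1 + d2 + d3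
        -- invariants of ψ'
        have h0' : ψ'.coeff 0 = 0 := by
          rw [Polynomial.coeff_zero_eq_eval_zero, hψ'def]
          simp only [Polynomial.eval_sub, Polynomial.eval_comp, Polynomial.eval_add,
            Polynomial.eval_X, Polynomial.eval_C]
          rw [← Polynomial.coeff_zero_eq_eval_zero, h0]
          simp
        have hdeg' : ψ'.natDegree ≤ d := by
          have := shiftdiff_natDegree ψ t₀ (by omega)
          rw [← hψ'def] at this
          omega
        exact ih W ψ' hfix' h1' hval' hψ'ne h0' hdeg'

/-- From any fixing family with a non-constant value at coordinate `jf`,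
produce a family with exact linear slope. -/
lemma slope (x : E) (jf : Fin n) (s : ℕ) (W : List (L × MvPolynomial (Fin s) f))
    (hWfix : ∀ u, fixLT B x (jf : ℕ) (fev B T W u))
    (hW0 : fev B T W (fun _ => 0) = 1)
    (u₀ : Fin s → f) (hu₀ : co B (fev B T W u₀ x) jf ≠ co B x jf) :
    ∃ (V' : List (L × MvPolynomial (Fin 1) f)) (e : f), e ≠ 0 ∧
      (∀ t : f, fixLT B x (jf : ℕ) (fev B T V' (fun _ => t))) ∧
      (fev B T V' (fun _ => (0:f)) = 1) ∧
      (∀ t : f, co B (fev B T V' (fun _ => t) x) jf = co B x jf + e * t) := by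
  obtain ⟨pp, hpp⟩ := fev_poly B T W x
  set P : MvPolynomial (Fin s) f := pp jf - MvPolynomial.C (co B x jf) with hP
  have hPval : ∀ u, MvPolynomial.eval u P = co B (fev B T W u x) jf - co B x jf := by
    intro u; rw [hP]; simp [hpp u jf]
  set σ : Fin s → MvPolynomial (Fin 1) f :=
    fun i => MvPolynomial.C (u₀ i) * MvPolynomial.X 0 with hσ
  set V := fsub σ W with hV
  have hVev : ∀ t : f, fev B T V (fun _ => t) = fev B T W (fun i => u₀ i * t) := by
    intro t; rw [hV, fev_fsub]; congr 1; funext i; simp [hσ]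
  set ψ : Polynomial f :=
    MvPolynomial.aeval (fun i => Polynomial.C (u₀ i) * Polynomial.X) P with hψ
  have hψeval : ∀ t : f, ψ.eval t = MvPolynomial.eval (fun i => u₀ i * t) P := by
    intro t
    rw [hψ, mv_line_eval]
    have he : (fun i => Polynomial.eval t (Polynomial.C (u₀ i) * Polynomial.X))
        = fun i => u₀ i * t := by
      funext i; simp
    rw [he]
  have hfix' : ∀ t : f, fixLT B x (jf : ℕ) (fev B T V (fun _ => t)) := by
    intro t; rw [hVev]; exact hWfix _
  have h1' : fev B T V (fun _ => (0:f)) = 1 := by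
    rw [hVev]
    have : (fun i => u₀ i * 0) = (fun _ : Fin s => (0:f)) := by funext i; ring
    rw [this, hW0]
  have hval' : ∀ t : f, co B (fev B T V (fun _ => t) x) jf - co B x jf = ψ.eval t := by
    intro t; rw [hVev, hψeval, hPval]
  have hne : ψ ≠ 0 := by
    intro hc
    have h7 := hψeval 1
    rw [hc] at h7
    simp only [Polynomial.eval_zero] at h7
    have : (fun i => u₀ i * 1) = u₀ := by funext i; ring
    rw [this, hPval] at h7
    exact hu₀ (by linear_combination -h7)
  have h0 : ψ.coeff 0 = 0 := by
    rw [Polynomial.coeff_zero_eq_eval_zero, hψeval 0]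
    have : (fun i => u₀ i * 0) = (fun _ : Fin s => (0:f)) := by funext i; ring
    rw [this, hPval, hW0]
    simp
  exact descent B T hT hn x jf ψ.natDegree V ψ hfix' h1' hval' hne h0 le_rfl

/-- The main induction: every fixing group element is realized by a fixing family. -/
lemma pk (x : E) : ∀ (j : ℕ) (g : Module.End f E), g ∈ Ga B T → fixLT B x j g →
    ∃ (s : ℕ) (W : List (L × MvPolynomial (Fin s) f)) (us : Fin s → f),
      (∀ u, fixLT B x j (fev B T W u)) ∧ fev B T W us = g ∧
        fev B T W (fun _ => 0) = 1 := by
  intro j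
  induction j with
  | zero =>
    intro g hg hfx0
    clear hfx0
    induction hg using Submonoid.closure_induction with
    | mem g hgs =>
      obtain ⟨l, rfl⟩ := hgs
      refine ⟨1, [(l, MvPolynomial.X 0)], (fun _ => 1), fun u i hi => absurd hi (by omega),
        ?_, ?_⟩
      · rw [fev_cons, fev_nil, mul_one]
        rw [MvPolynomial.eval_X]
        unfold Ex
        exact (Finset.sum_congr rfl fun m _ => by rw [one_pow, mul_one]).symm
      · rw [fev_cons, fev_nil, mul_one, MvPolynomial.eval_X]
        exact Ex_zero B T hT hn l
    | one =>
      exact ⟨0, [], (fun _ => 0), fun u i hi => absurd hi (by omega), rfl, rfl⟩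
    | mul g₁ g₂ hg₁ hg₂ ih₁ ih₂ =>
      obtain ⟨s₁, W₁, us₁, _, hg₁', h0₁⟩ := ih₁
      obtain ⟨s₂, W₂, us₂, _, hg₂', h0₂⟩ := ih₂
      set σ₁ : Fin s₁ → MvPolynomial (Fin (s₁ + s₂)) f :=
        fun i => MvPolynomial.X (Fin.castAdd s₂ i) with hσ₁
      set σ₂ : Fin s₂ → MvPolynomial (Fin (s₁ + s₂)) f :=
        fun i => MvPolynomial.X (Fin.natAdd s₁ i) with hσ₂
      refine ⟨s₁ + s₂, fsub σ₁ W₁ ++ fsub σ₂ W₂, Fin.append us₁ us₂,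
        fun u i hi => absurd hi (by omega), ?_, ?_⟩
      · rw [fev_append, fev_fsub, fev_fsub]
        have e1 : (fun i => MvPolynomial.eval (Fin.append us₁ us₂) (σ₁ i)) = us₁ := by
          funext i; rw [hσ₁]; simp [Fin.append_left]
        have e2 : (fun i => MvPolynomial.eval (Fin.append us₁ us₂) (σ₂ i)) = us₂ := by
          funext i; rw [hσ₂]; simp [Fin.append_right]
        rw [e1, e2, hg₁', hg₂']
      · rw [fev_append, fev_fsub, fev_fsub]
        have e1 : (fun i => MvPolynomial.eval (fun _ : Fin (s₁+s₂) => (0:f)) (σ₁ i))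
            = (fun _ : Fin s₁ => (0:f)) := by funext i; rw [hσ₁]; simp
        have e2 : (fun i => MvPolynomial.eval (fun _ : Fin (s₁+s₂) => (0:f)) (σ₂ i))
            = (fun _ : Fin s₂ => (0:f)) := by funext i; rw [hσ₂]; simp
        rw [e1, e2, h0₁, h0₂, one_mul]
  | succ j ih =>
    intro g hg hfix
    obtain ⟨s, W, us, hWfix, hWg, hW0⟩ := ih g hg (fixLT_mono B x (Nat.le_succ j) hfix)
    by_cases hj : j < n
    · set jf : Fin n := ⟨j, hj⟩ with hjf
      by_cases hcase : ∀ u, co B (fev B T W u x) jf = co B x jf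
      · refine ⟨s, W, us, ?_, hWg, hW0⟩
        intro u i hi
        rcases Nat.lt_or_ge (i : ℕ) j with h | h
        · exact hWfix u i h
        · have hij : i = jf := Fin.ext (by simp [hjf]; omega)
          rw [hij]
          exact hcase u
      · push_neg at hcase
        obtain ⟨u₀, hu₀⟩ := hcase
        obtain ⟨V', e, he, hfixV', h1V', hvalV'⟩ :=
          slope B T hT hn x jf s W hWfix hW0 u₀ hu₀
        obtain ⟨pp, hpp⟩ := fev_poly B T W x
        set P : MvPolynomial (Fin s) f := pp jf - MvPolynomial.C (co B x jf) with hP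
        have hPval : ∀ u, MvPolynomial.eval u P = co B (fev B T W u x) jf - co B x jf := by
          intro u; rw [hP]; simp [hpp u jf]
        set τ : Fin 1 → MvPolynomial (Fin s) f :=
          fun _ => MvPolynomial.C (-e⁻¹) * P with hτ
        set W' := fsub τ V' ++ W with hW'
        have hevW' : ∀ u, fev B T W' u
            = fev B T V' (fun _ => -e⁻¹ * MvPolynomial.eval u P) * fev B T W u := by
          intro u
          rw [hW', fev_append, fev_fsub]
          congr 2
          funext i0
          rw [hτ]
          simp
        refine ⟨s, W', us, ?_, ?_, ?_⟩
        · intro u i hi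
          rcases Nat.lt_or_ge (i : ℕ) j with h | h
          · rw [hevW' u]
            refine fixLT_mul B x (triP_mem B T hT (fev_mem B T _ _)) ?_ ?_ i h
            · intro i' hi'
              exact hfixV' _ i' hi'
            · intro i' hi'
              exact hWfix u i' hi'
          · have hij : i = jf := Fin.ext (by simp [hjf]; omega)
            rw [hij, hevW' u]
            have hm := delta_mul B x
              (g := fev B T V' (fun _ => -e⁻¹ * MvPolynomial.eval u P))
              (h := fev B T W u)
              (triP_mem B T hT (fev_mem B T _ _)) jf
              (fun i' hi' => hWfix u i' hi')
            rw [hm, hvalV' _, hPval u]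
            have he' : e * (-e⁻¹ * MvPolynomial.eval u P) = -(MvPolynomial.eval u P) := by
              have h9 : e * e⁻¹ = 1 := mul_inv_cancel₀ he
              linear_combination (-(MvPolynomial.eval u P)) * h9
            rw [hPval u] at he'
            linear_combination he'
        · have hP0 : MvPolynomial.eval us P = 0 := by
            rw [hPval us, hWg]
            have := hfix jf (by simp [hjf])
            linear_combination this
          rw [hevW' us, hP0]
          have : (-e⁻¹ * (0:f)) = 0 := by ring
          rw [this, h1V', one_mul, hWg]
        · have hP0 : MvPolynomial.eval (fun _ : Fin s => (0:f)) P = 0 := by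
            rw [hPval, hW0]
            simp
          rw [hevW' _, hP0]
          have : (-e⁻¹ * (0:f)) = 0 := by ring
          rw [this, h1V', one_mul, hW0]
    · refine ⟨s, W, us, ?_, hWg, hW0⟩
      intro u i hi
      exact hWfix u i (by have := i.isLt; omega)

/-- reach a zero of the critical coordinate inside the fiber -/
lemma reach (x : E) (jf : Fin n) (g : Module.End f E) (hg : g ∈ Ga B T)
    (hfix : fixLT B x (jf : ℕ) g) (hd : co B (g x) jf ≠ co B x jf) :
    ∃ h, h ∈ Ga B T ∧ fixLT B x (jf : ℕ) h ∧ co B (h x) jf = 0 := by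
  obtain ⟨s, W, us, hWfix, hWg, hW0⟩ := pk B T hT hn x (jf : ℕ) g hg hfix
  have hu₀ : co B (fev B T W us x) jf ≠ co B x jf := by rw [hWg]; exact hd
  obtain ⟨V', e, he, hfixV', h1V', hvalV'⟩ :=
    slope B T hT hn x jf s W hWfix hW0 us hu₀
  refine ⟨fev B T V' (fun _ => -(co B x jf) * e⁻¹), fev_mem B T _ _, hfixV' _, ?_⟩
  rw [hvalV' _]
  have h9 : e * e⁻¹ = 1 := mul_inv_cancel₀ he
  have h10 : e * (-(co B x jf) * e⁻¹) = -(co B x jf) := by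
    linear_combination (-(co B x jf)) * h9
  rw [h10]
  ring

/-- inverses exist in the monoid -/
lemma inv_exists : ∀ g ∈ Ga B T, ∃ g', g' ∈ Ga B T ∧ g' * g = 1 ∧ g * g' = 1 := by
  intro g hg
  induction hg using Submonoid.closure_induction with
  | mem g hgs =>
    obtain ⟨l, rfl⟩ := hgs
    have hgen : (∑ m ∈ Finset.range n, ((m.factorial : f)⁻¹) • (T l) ^ m) = Ex B T 1 l := by
      unfold Ex
      exact Finset.sum_congr rfl fun m _ => by rw [one_pow, mul_one]
    refine ⟨Ex B T (-1) l, Ex_mem B T _ _, ?_, ?_⟩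
    · rw [hgen]
      exact Ex_cancel' B T hT hn 1 l
    · rw [hgen]
      exact Ex_cancel B T hT hn 1 l
  | one => exact ⟨1, one_mem _, one_mul 1, one_mul 1⟩
  | mul g₁ g₂ hg₁ hg₂ ih₁ ih₂ =>
    obtain ⟨g₁', hm₁, hl₁, hr₁⟩ := ih₁
    obtain ⟨g₂', hm₂, hl₂, hr₂⟩ := ih₂
    refine ⟨g₂' * g₁', mul_mem hm₂ hm₁, ?_, ?_⟩
    · rw [mul_assoc, ← mul_assoc g₁', hl₁, one_mul, hl₂]
    · rw [mul_assoc, ← mul_assoc g₂, hr₂, one_mul, hr₁]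

end mainsec


/-! ### the weight function and its lexicographic property -/

section weight

open scoped Classical

variable (B : Module.Basis (Fin n) f E)

/-- binary weight of the zero pattern -/
noncomputable def Nv (v : E) : ℕ :=
  ∑ i : Fin n, if co B v i = 0 then 2 ^ (n - 1 - (i : ℕ)) else 0

lemma geom_two : ∀ m : ℕ, (∑ k ∈ Finset.range m, 2 ^ k) = 2 ^ m - 1 := by
  intro m
  induction m with
  | zero => rfl
  | succ m ih =>
    rw [Finset.sum_range_succ, ih]
    have h1 : 1 ≤ 2 ^ m := Nat.one_le_two_pow
    have h2 : 2 ^ (m + 1) = 2 * 2 ^ m := by rw [pow_succ]; ring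
    omega

lemma sum_split (i₀ : Fin n) (F : Fin n → ℕ) :
    ∑ i : Fin n, F i = (∑ i ∈ Finset.Iio i₀, F i) + (F i₀ + ∑ i ∈ Finset.Ioi i₀, F i) := by
  classical
  have hu : (Finset.univ : Finset (Fin n)) = Finset.Iio i₀ ∪ Finset.Ici i₀ := by
    ext i
    simp only [Finset.mem_univ, Finset.mem_union, Finset.mem_Iio, Finset.mem_Ici, true_iff]
    exact lt_or_ge i i₀
  have hd : Disjoint (Finset.Iio i₀) (Finset.Ici i₀) := by
    rw [Finset.disjoint_left]
    intro a ha hb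
    simp only [Finset.mem_Iio] at ha
    simp only [Finset.mem_Ici] at hb
    exact absurd ha (not_lt.2 hb)
  rw [hu, Finset.sum_union hd, ← Finset.Ioi_insert, Finset.sum_insert (by simp)]

lemma Ioi_pow_sum (i₀ : Fin n) :
    (∑ i ∈ Finset.Ioi i₀, 2 ^ (n - 1 - (i : ℕ))) < 2 ^ (n - 1 - (i₀ : ℕ)) := by
  classical
  have hsub : Finset.image (fun i : Fin n => n - 1 - (i : ℕ)) (Finset.Ioi i₀)
      ⊆ Finset.range (n - 1 - (i₀ : ℕ)) := by
    intro k hk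
    simp only [Finset.mem_image, Finset.mem_Ioi] at hk
    obtain ⟨i, hi, rfl⟩ := hk
    simp only [Finset.mem_range]
    have h1 : (i₀ : ℕ) < (i : ℕ) := hi
    have h2 : (i : ℕ) < n := i.isLt
    omega
  have hinj : ∀ a ∈ Finset.Ioi i₀, ∀ b ∈ Finset.Ioi i₀,
      n - 1 - (a : ℕ) = n - 1 - (b : ℕ) → a = b := by
    intro a _ b _ hab
    have ha := a.isLt
    have hb := b.isLt
    exact Fin.ext (by omega)
  calc ∑ i ∈ Finset.Ioi i₀, 2 ^ (n - 1 - (i : ℕ))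
      = ∑ k ∈ Finset.image (fun i : Fin n => n - 1 - (i : ℕ)) (Finset.Ioi i₀), 2 ^ k :=
        (Finset.sum_image hinj).symm
    _ ≤ ∑ k ∈ Finset.range (n - 1 - (i₀ : ℕ)), 2 ^ k := Finset.sum_le_sum_of_subset hsub
    _ < 2 ^ (n - 1 - (i₀ : ℕ)) := by
        rw [geom_two]
        have : 1 ≤ 2 ^ (n - 1 - (i₀ : ℕ)) := Nat.one_le_two_pow
        omega

lemma Nlt (v w : E) (i₀ : Fin n)
    (hagree : ∀ i : Fin n, i < i₀ → (co B v i = 0 ↔ co B w i = 0))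
    (hv : co B v i₀ = 0) (hw : co B w i₀ ≠ 0) : Nv B w < Nv B v := by
  unfold Nv
  rw [sum_split i₀ (fun i => if co B v i = 0 then 2 ^ (n - 1 - (i : ℕ)) else 0),
    sum_split i₀ (fun i => if co B w i = 0 then 2 ^ (n - 1 - (i : ℕ)) else 0)]
  have hA : (∑ i ∈ Finset.Iio i₀, if co B w i = 0 then 2 ^ (n - 1 - (i : ℕ)) else 0)
      = ∑ i ∈ Finset.Iio i₀, if co B v i = 0 then 2 ^ (n - 1 - (i : ℕ)) else 0 := by
    refine Finset.sum_congr rfl fun i hi => ?_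
    have hi' : i < i₀ := Finset.mem_Iio.1 hi
    by_cases h : co B v i = 0
    · rw [if_pos h, if_pos ((hagree i hi').1 h)]
    · rw [if_neg h, if_neg (fun hc => h ((hagree i hi').2 hc))]
  rw [hA, if_pos hv, if_neg hw]
  apply Nat.add_lt_add_left
  calc 0 + ∑ i ∈ Finset.Ioi i₀, (if co B w i = 0 then 2 ^ (n - 1 - (i : ℕ)) else 0)
      ≤ ∑ i ∈ Finset.Ioi i₀, 2 ^ (n - 1 - (i : ℕ)) := by
        rw [zero_add]
        refine Finset.sum_le_sum fun i _ => ?_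
        split
        · exact le_rfl
        · exact Nat.zero_le _
    _ < 2 ^ (n - 1 - (i₀ : ℕ)) := Ioi_pow_sum i₀
    _ ≤ 2 ^ (n - 1 - (i₀ : ℕ)) + ∑ i ∈ Finset.Ioi i₀,
          (if co B v i = 0 then 2 ^ (n - 1 - (i : ℕ)) else 0) := Nat.le_add_right _ _

end weight

end Stmt10Aux

/-- Theorem 1 of the paper: for a strictly triangular representation `T`, every orbit of
the group `Γ(T)` generated by the exponentials `exp (T l)` contains a point `x` that is
minimal for the preorder `⪯` : for every `y ≠ x` on the orbit, `x ≺ y`. -/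
theorem stmt10 (f L E : Type*) [Field f] [CharZero f] [LieRing L] [LieAlgebra f L]
    [AddCommGroup E] [Module f E] (n : ℕ) (B : Module.Basis (Fin n) f E)
    (T : L →ₗ⁅f⁆ Module.End f E)
    (hT : ∀ l : L, ∀ i j : Fin n, j ≤ i → B.repr (T l (B i)) j = 0)
    (x₀ : E) :
    letI S : Set (Module.End f E) :=
      {g | ∃ l : L, g = ∑ m ∈ Finset.range n, ((m.factorial : f)⁻¹) • (T l) ^ m}
    letI O : Set E := {y | ∃ g ∈ Submonoid.closure S, y = g x₀}
    ∃ x ∈ O, ∀ y ∈ O, y ≠ x →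
      ((∀ j, B.repr x j ≠ 0 → B.repr y j = 0 → ∃ i ≤ j, B.repr x i = 0 ∧ B.repr y i ≠ 0) ∧
       ¬ (∀ j, B.repr y j ≠ 0 → B.repr x j = 0 →
            ∃ i ≤ j, B.repr y i = 0 ∧ B.repr x i ≠ 0)) := by
  classical
  by_cases hn : 0 < n
  case neg =>
    refine ⟨x₀, ⟨1, one_mem _, (Module.End.one_apply x₀).symm⟩, ?_⟩
    intro y _ hne
    exfalso
    apply hne
    exact B.ext_elem fun i => absurd i.isLt (by omega)
  case pos =>
  have hOm : ({k : ℕ | ∃ g ∈ Stmt10Aux.Ga B T, Stmt10Aux.Nv B (g x₀) = k}).Nonempty := by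
    exact ⟨Stmt10Aux.Nv B x₀, 1, one_mem _, by rw [Module.End.one_apply]⟩
  have hbdd : BddAbove {k : ℕ | ∃ g ∈ Stmt10Aux.Ga B T, Stmt10Aux.Nv B (g x₀) = k} := by
    refine ⟨∑ i : Fin n, 2 ^ (n - 1 - (i : ℕ)), ?_⟩
    rintro k ⟨g, _, rfl⟩
    refine Finset.sum_le_sum fun i _ => ?_
    split
    · exact le_rfl
    · exact Nat.zero_le _
  obtain ⟨g₀, hg₀, hg₀N⟩ := Nat.sSup_mem hOm hbdd
  set x : E := g₀ x₀ with hxdef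
  have hmax : ∀ g ∈ Stmt10Aux.Ga B T, Stmt10Aux.Nv B (g x₀) ≤ Stmt10Aux.Nv B x := by
    intro g hg
    rw [hxdef, hg₀N]
    exact le_csSup hbdd ⟨g, hg, rfl⟩
  obtain ⟨g₀', hg₀'m, hinv1, _⟩ := Stmt10Aux.inv_exists B T hT hn g₀ hg₀
  refine ⟨x, ⟨g₀, hg₀, rfl⟩, ?_⟩
  rintro y ⟨g₁, hg₁, rfl⟩ hne1
  -- Step 1: the zero patterns of y and x must differ.
  have hZdiff : ∃ i : Fin n, ¬(B.repr (g₁ x₀) i = 0 ↔ B.repr x i = 0) := by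
    by_contra hall
    push_neg at hall
    apply hne1
    by_contra hyx
    have hDne : (Finset.univ.filter
        (fun i : Fin n => Stmt10Aux.co B (g₁ x₀) i ≠ Stmt10Aux.co B x i)).Nonempty := by
      rw [Finset.filter_nonempty_iff]
      by_contra hD
      push_neg at hD
      apply hyx
      exact B.ext_elem fun i => hD i (Finset.mem_univ i)
    set j := (Finset.univ.filter
        (fun i : Fin n => Stmt10Aux.co B (g₁ x₀) i ≠ Stmt10Aux.co B x i)).min' hDne with hjdef
    have hjmem := Finset.min'_mem _ hDne
    rw [Finset.mem_filter] at hjmem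
    have hjd : Stmt10Aux.co B (g₁ x₀) j ≠ Stmt10Aux.co B x j := hjmem.2
    have hagree : ∀ i : Fin n, i < j → Stmt10Aux.co B (g₁ x₀) i = Stmt10Aux.co B x i := by
      intro i hi
      by_contra hc
      have hle : j ≤ i := Finset.min'_le _ _ (by
        rw [Finset.mem_filter]
        exact ⟨Finset.mem_univ i, hc⟩)
      exact absurd (lt_of_lt_of_le hi hle) (lt_irrefl _)
    have hxj : Stmt10Aux.co B x j ≠ 0 := by
      intro h0
      have h1 : Stmt10Aux.co B (g₁ x₀) j = 0 := (hall j).mpr h0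
      exact hjd (by rw [h1, h0])
    have hgx : (g₁ * g₀') x = g₁ x₀ := by
      rw [Module.End.mul_apply, hxdef]
      congr 1
      rw [← Module.End.mul_apply, hinv1, Module.End.one_apply]
    have hgm : g₁ * g₀' ∈ Stmt10Aux.Ga B T := mul_mem hg₁ hg₀'m
    have hfixg : Stmt10Aux.fixLT B x (j : ℕ) (g₁ * g₀') := by
      intro i hi
      rw [hgx]
      exact hagree i hi
    have hdg : Stmt10Aux.co B ((g₁ * g₀') x) j ≠ Stmt10Aux.co B x j := by
      rw [hgx]; exact hjd
    obtain ⟨h, hhm, hhfix, hh0⟩ := Stmt10Aux.reach B T hT hn x j (g₁ * g₀') hgm hfixg hdg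
    have hlt : Stmt10Aux.Nv B x < Stmt10Aux.Nv B (h x) := by
      refine Stmt10Aux.Nlt B (h x) x j (fun i hi => ?_) hh0 hxj
      rw [hhfix i hi]
    have hle : Stmt10Aux.Nv B (h x) ≤ Stmt10Aux.Nv B x := by
      have he : (h * g₀) x₀ = h x := by rw [Module.End.mul_apply, hxdef]
      have := hmax (h * g₀) (mul_mem hhm hg₀)
      rwa [he] at this
    omega
  -- Step 2: at the first pattern difference, `x` is zero and `y` is not.
  have hDpne : (Finset.univ.filter
      (fun i : Fin n => ¬(B.repr (g₁ x₀) i = 0 ↔ B.repr x i = 0))).Nonempty := by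
    obtain ⟨i, hi⟩ := hZdiff
    exact ⟨i, by rw [Finset.mem_filter]; exact ⟨Finset.mem_univ i, hi⟩⟩
  set i₀ := (Finset.univ.filter
      (fun i : Fin n => ¬(B.repr (g₁ x₀) i = 0 ↔ B.repr x i = 0))).min' hDpne with hi₀def
  have hi₀mem := Finset.min'_mem _ hDpne
  rw [Finset.mem_filter] at hi₀mem
  have hi₀d : ¬(B.repr (g₁ x₀) i₀ = 0 ↔ B.repr x i₀ = 0) := hi₀mem.2
  have hagreeP : ∀ i : Fin n, i < i₀ → (B.repr (g₁ x₀) i = 0 ↔ B.repr x i = 0) := by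
    intro i hi
    by_contra hc
    have hle : i₀ ≤ i := Finset.min'_le _ _ (by
      rw [Finset.mem_filter]
      exact ⟨Finset.mem_univ i, hc⟩)
    exact absurd (lt_of_lt_of_le hi hle) (lt_irrefl _)
  have hx0 : B.repr x i₀ = 0 ∧ B.repr (g₁ x₀) i₀ ≠ 0 := by
    by_cases hxx : B.repr x i₀ = 0
    · refine ⟨hxx, fun hyy => hi₀d ⟨fun _ => hxx, fun _ => hyy⟩⟩
    · exfalso
      have hyy : B.repr (g₁ x₀) i₀ = 0 := by
        by_contra hyy
        exact hi₀d ⟨fun h1 => absurd h1 hyy, fun h2 => absurd h2 hxx⟩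
      have hlt : Stmt10Aux.Nv B x < Stmt10Aux.Nv B (g₁ x₀) :=
        Stmt10Aux.Nlt B (g₁ x₀) x i₀ (fun i hi => hagreeP i hi) hyy hxx
      have hle := hmax g₁ hg₁
      omega
  obtain ⟨hxi₀, hyi₀⟩ := hx0
  constructor
  · intro jj hxjj hyjj
    refine ⟨i₀, ?_, hxi₀, hyi₀⟩
    by_contra hlt
    push_neg at hlt
    exact hxjj ((hagreeP jj hlt).1 hyjj)
  · intro hforall
    obtain ⟨i, hile, hyi, hxi⟩ := hforall i₀ hyi₀ hxi₀
    rcases eq_or_lt_of_le hile with heq | hlt2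
    · rw [heq] at hyi
      exact hyi₀ hyi
    · exact hxi ((hagreeP i hlt2).1 hyi)
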